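/- Let S : ℝ^d → [0,∞) be integrable with S(u)(1+‖u‖^r) ≥ C for almost every u, for some C > 0 and r ∈ ℕ, and let k(x,y) = ∫_{ℝ^d} cos(⟨u, x−y⟩) S(u) du. Then for every sequence (x_n)_{n≥1} in ℝ^d and every x ∈ ℝ^d: if the kriging variance σ²(x; x₁,…,x_n) tends to 0 as n → ∞, then x belongs to the closure of {x_n : n ≥ 1}. (That is, a process with such a spectral density has the No-Empty-Ball property.) -/

import Mathlib

open MeasureTheory Filter Real
open scoped RealInnerProductSpace FourierTransform

/-- The quadratic form `Qₙ(λ)`. -/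
noncomputable def krigQ {d : ℕ}
    (k : EuclideanSpace ℝ (Fin d) → EuclideanSpace ℝ (Fin d) → ℝ)
    (x : EuclideanSpace ℝ (Fin d)) {n : ℕ}
    (pts : Fin n → EuclideanSpace ℝ (Fin d)) (lam : Fin n → ℝ) : ℝ :=
  k x x - 2 * ∑ i, lam i * k x (pts i)
    + ∑ i, ∑ j, lam i * lam j * k (pts i) (pts j)

/-- The kriging variance `σ²(x; x₁,…,x_n) = inf_{λ ∈ ℝⁿ} Qₙ(λ)`. -/
noncomputable def krigVar {d : ℕ}
    (k : EuclideanSpace ℝ (Fin d) → EuclideanSpace ℝ (Fin d) → ℝ)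
    (x : EuclideanSpace ℝ (Fin d)) {n : ℕ}
    (pts : Fin n → EuclideanSpace ℝ (Fin d)) : ℝ :=
  ⨅ lam : Fin n → ℝ, krigQ k x pts lam

lemma real_expand {n : ℕ} (c s : ℝ) (hcs : c^2 + s^2 = 1) (cs ss : Fin n → ℝ) (lam : Fin n → ℝ) :
    (c - ∑ i, lam i * cs i) * (c - ∑ i, lam i * cs i)
      + (s - ∑ i, lam i * ss i) * (s - ∑ i, lam i * ss i)
      = 1 - 2 * ∑ i, lam i * (c * cs i + s * ss i)
        + ∑ i, ∑ j, lam i * lam j * (cs i * cs j + ss i * ss j) := by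
  have h1 : ∑ i, lam i * (c * cs i + s * ss i)
      = c * ∑ i, lam i * cs i + s * ∑ i, lam i * ss i := by
    rw [Finset.mul_sum, Finset.mul_sum, ← Finset.sum_add_distrib]
    exact Finset.sum_congr rfl fun i _ => by ring
  have h2 : ∑ i, ∑ j, lam i * lam j * (cs i * cs j + ss i * ss j)
      = (∑ i, lam i * cs i) * (∑ j, lam j * cs j)
        + (∑ i, lam i * ss i) * (∑ j, lam j * ss j) := by
    rw [Finset.sum_mul_sum, Finset.sum_mul_sum, ← Finset.sum_add_distrib]
    refine Finset.sum_congr rfl fun i _ => ?_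
    rw [← Finset.sum_add_distrib]
    exact Finset.sum_congr rfl fun j _ => by ring
  rw [h1, h2]; nlinarith [hcs]

lemma normSq_expand {n : ℕ} (θ : ℝ) (θs : Fin n → ℝ) (lam : Fin n → ℝ) :
    ‖Complex.exp (θ * Complex.I) - ∑ i, (lam i : ℂ) * Complex.exp (θs i * Complex.I)‖ ^ 2
      = 1 - 2 * ∑ i, lam i * Real.cos (θ - θs i)
        + ∑ i, ∑ j, lam i * lam j * Real.cos (θs i - θs j) := by
  have hre : (Complex.exp (θ * Complex.I) - ∑ i, (lam i : ℂ) * Complex.exp (θs i * Complex.I)).re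
      = Real.cos θ - ∑ i, lam i * Real.cos (θs i) := by
    simp [Complex.exp_ofReal_mul_I_re, Complex.re_sum, Complex.re_ofReal_mul]
  have him : (Complex.exp (θ * Complex.I) - ∑ i, (lam i : ℂ) * Complex.exp (θs i * Complex.I)).im
      = Real.sin θ - ∑ i, lam i * Real.sin (θs i) := by
    simp [Complex.exp_ofReal_mul_I_im, Complex.im_sum, Complex.im_ofReal_mul]
  rw [Complex.sq_norm, Complex.normSq_apply, hre, him]
  simp only [Real.cos_sub]
  exact real_expand (Real.cos θ) (Real.sin θ) (by rw [← Real.sin_sq_add_cos_sq θ]; ring)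
    (fun i => Real.cos (θs i)) (fun i => Real.sin (θs i)) lam

lemma krigQ_eq_integral {d : ℕ} (S : EuclideanSpace ℝ (Fin d) → ℝ) (hS_int : Integrable S)
    (k : EuclideanSpace ℝ (Fin d) → EuclideanSpace ℝ (Fin d) → ℝ)
    (hk : ∀ x y, k x y = ∫ u, Real.cos ⟪u, x - y⟫ * S u)
    (x : EuclideanSpace ℝ (Fin d)) {n : ℕ}
    (pts : Fin n → EuclideanSpace ℝ (Fin d)) (lam : Fin n → ℝ) :
    krigQ k x pts lam = ∫ u, ‖Complex.exp ((⟪u, x⟫ : ℝ) * Complex.I)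
        - ∑ i, (lam i : ℂ) * Complex.exp ((⟪u, pts i⟫ : ℝ) * Complex.I)‖ ^ 2 * S u := by
  have Ic : ∀ a b : EuclideanSpace ℝ (Fin d),
      Integrable (fun u => Real.cos ⟪u, a - b⟫ * S u) := by
    intro a b
    refine hS_int.bdd_mul ?_ (c := 1) (ae_of_all _ fun u => by simpa using Real.abs_cos_le_one _)
    exact (Real.continuous_cos.comp ((continuous_id.inner continuous_const))).aestronglyMeasurable
  have h1 : (fun u => ‖Complex.exp ((⟪u, x⟫ : ℝ) * Complex.I)
        - ∑ i, (lam i : ℂ) * Complex.exp ((⟪u, pts i⟫ : ℝ) * Complex.I)‖ ^ 2 * S u)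
      = fun u => (Real.cos ⟪u, x - x⟫ * S u
          + ∑ i, ∑ j, lam i * lam j * (Real.cos ⟪u, pts i - pts j⟫ * S u))
        - 2 * ∑ i, lam i * (Real.cos ⟪u, x - pts i⟫ * S u) := by
    funext u
    rw [normSq_expand]
    have e1 : ∀ a b : EuclideanSpace ℝ (Fin d), ⟪u, a⟫ - ⟪u, b⟫ = ⟪u, a - b⟫ := fun a b =>
      (inner_sub_right u a b).symm
    simp only [e1]
    have e0 : Real.cos ⟪u, x - x⟫ = 1 := by simp
    rw [e0]
    have hA : (∑ i, lam i * Real.cos ⟪u, x - pts i⟫) * S u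
        = ∑ i, lam i * (Real.cos ⟪u, x - pts i⟫ * S u) := by
      rw [Finset.sum_mul]; exact Finset.sum_congr rfl fun i _ => mul_assoc _ _ _
    have hB : (∑ i, ∑ j, lam i * lam j * Real.cos ⟪u, pts i - pts j⟫) * S u
        = ∑ i, ∑ j, lam i * lam j * (Real.cos ⟪u, pts i - pts j⟫ * S u) := by
      rw [Finset.sum_mul]
      refine Finset.sum_congr rfl fun i _ => ?_
      rw [Finset.sum_mul]
      exact Finset.sum_congr rfl fun j _ => mul_assoc _ _ _
    have e2 : Real.cos ⟪u, x - x⟫ * S u = 1 * S u := by rw [e0]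
    linear_combination hB - 2 * hA
  rw [h1]
  have IB : Integrable (fun u => ∑ i, ∑ j, lam i * lam j *
      (Real.cos ⟪u, pts i - pts j⟫ * S u)) :=
    integrable_finset_sum _ fun i _ => integrable_finset_sum _
      fun j _ => ((Ic (pts i) (pts j)).const_mul _)
  have IA : Integrable (fun u => ∑ i, lam i * (Real.cos ⟪u, x - pts i⟫ * S u)) :=
    integrable_finset_sum _ fun i _ => ((Ic x (pts i)).const_mul _)
  have IAB : Integrable (fun u => Real.cos ⟪u, x - x⟫ * S u
      + ∑ i, ∑ j, lam i * lam j * (Real.cos ⟪u, pts i - pts j⟫ * S u)) := (Ic x x).add IB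
  have IA2 : Integrable (fun u => 2 * ∑ i, lam i * (Real.cos ⟪u, x - pts i⟫ * S u)) :=
    IA.const_mul 2
  rw [integral_sub IAB IA2,
    integral_add (Ic x x) IB,
    integral_finset_sum _ (fun i _ => integrable_finset_sum _
      fun j _ => ((Ic (pts i) (pts j)).const_mul _)),
    integral_const_mul]
  rw [integral_finset_sum _ (fun i _ => ((Ic x (pts i)).const_mul _))]
  have eM : ∀ (c : ℝ) (g : EuclideanSpace ℝ (Fin d) → ℝ), (∫ u, c * g u) = c * ∫ u, g u :=
    fun c g => integral_const_mul c g
  simp only [eM]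
  have eS : ∀ i, (∫ u, ∑ j, lam i * lam j * (Real.cos ⟪u, pts i - pts j⟫ * S u))
      = ∑ j, lam i * lam j * (∫ u, Real.cos ⟪u, pts i - pts j⟫ * S u) := by
    intro i
    rw [integral_finset_sum _ (fun j _ => ((Ic (pts i) (pts j)).const_mul _))]
    exact Finset.sum_congr rfl fun j _ => integral_const_mul _ _
  simp only [eS, ← hk]
  unfold krigQ; ring

variable {d : ℕ}
local notation "E" => EuclideanSpace ℝ (Fin d)

lemma smul_qmp (R : ℝ) (hR : R ≠ 0) :
    Measure.QuasiMeasurePreserving (fun u : E => R • u) volume volume := by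
  refine ⟨measurable_const_smul R, ?_⟩
  rw [Measure.map_addHaar_smul volume hR]
  exact Measure.smul_absolutelyContinuous

lemma amgm_div (a b s t : ℝ) (hs : 0 < s) (ht : 0 < t) :
    a * b ≤ t/2 * (a^2*s) + 1/(2*t) * (b^2/s) := by
  have exp2 : 2*t*s*(t/2*(a^2*s) + 1/(2*t)*(b^2/s)) = (t*s*a)^2 + b^2 := by
    field_simp
  have key : 2*t*s*(a*b) ≤ 2*t*s*(t/2*(a^2*s) + 1/(2*t)*(b^2/s)) := by
    rw [exp2]; nlinarith [sq_nonneg (t*s*a - b), mul_pos ht hs]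
  exact le_of_mul_le_mul_left key (by positivity)

set_option maxHeartbeats 4000000 in
lemma integral_lower_bound (S : E → ℝ)
    (hS_nonneg : ∀ u, 0 ≤ S u) (hS_int : Integrable S)
    (C : ℝ) (hC : 0 < C) (r : ℕ)
    (hS_low : ∀ᵐ u : E, C ≤ S u * (1 + ‖u‖ ^ r))
    (x : E) (ε : ℝ) (hε : 0 < ε) :
    ∃ c₀ > 0, ∀ {n : ℕ} (pts : Fin n → E), (∀ i, ε ≤ dist (pts i) x) → ∀ lam : Fin n → ℝ,
      c₀ ≤ ∫ u, ‖Complex.exp ((⟪u, x⟫ : ℝ) * Complex.I)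
          - ∑ i, (lam i : ℂ) * Complex.exp ((⟪u, pts i⟫ : ℝ) * Complex.I)‖ ^ 2 * S u := by
  classical
  -- the bump function
  set f : ContDiffBump x := ⟨ε/2, 3*ε/4, by positivity, by linarith⟩ with hf
  set F : E → ℂ := fun t => (f t : ℂ) with hF
  have hsm : ContDiff ℝ ((⊤ : ℕ∞) : WithTop ℕ∞) F :=
    Complex.ofRealCLM.contDiff.comp (f.contDiff (n := ⊤))
  have hsupp : HasCompactSupport F :=
    f.hasCompactSupport.comp_left (g := (Complex.ofReal : ℝ → ℂ)) Complex.ofReal_zero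
  have hdecay : ∀ (k n : ℕ), ∃ B : ℝ, ∀ y : E, ‖y‖ ^ k * ‖iteratedFDeriv ℝ n F y‖ ≤ B := by
    intro k n
    have h1 : HasCompactSupport (iteratedFDeriv ℝ n F) := hsupp.iteratedFDeriv n
    have hcont : Continuous (iteratedFDeriv ℝ n F) :=
      hsm.continuous_iteratedFDeriv (by exact_mod_cast le_top)
    have h2 : HasCompactSupport (fun y : E => ‖y‖ ^ k * ‖iteratedFDeriv ℝ n F y‖) :=
      (h1.norm).mul_left
    obtain ⟨B, hB⟩ := h2.exists_bound_of_continuous (by fun_prop)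
    exact ⟨B, fun y => (le_abs_self _).trans (Real.norm_eq_abs _ ▸ hB y)⟩
  set φ : SchwartzMap E ℂ := ⟨F, hsm, hdecay⟩ with hφ
  set Φ : SchwartzMap E ℂ := SchwartzMap.fourierTransformCLM ℂ φ with hΦ
  have hΦapp : ⇑Φ = 𝓕 F := rfl
  set ψ : E → ℂ := 𝓕 F with hψ
  have hψInt : Integrable ψ := hΦapp ▸ Φ.integrable
  have hFInt : Integrable F := (hsm.continuous).integrable_of_hasCompactSupport hsupp
  have hinv : ∀ t, F t = ∫ u, (𝐞 ⟪u, t⟫ : ℂ) * ψ u := by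
    intro t
    have := (hsm.continuous).fourierInv_fourier_eq hFInt hψInt
    conv_lhs => rw [← this]
    rw [Real.fourierInv_eq]
    simp_rw [Circle.smul_def, smul_eq_mul]
    rfl
  -- decay constants for ψ
  obtain ⟨B0, hB0pos, hB0⟩ := Φ.decay 0 0
  obtain ⟨Br, hBrpos, hBr⟩ := Φ.decay r 0
  have hψbd : ∀ (k : ℕ) (hk : k = 0 ∨ k = r) (u : E), ‖u‖ ^ k * ‖ψ u‖ ≤ max B0 Br := by
    rintro k (rfl | rfl) u
    · simpa [norm_iteratedFDeriv_zero, hΦapp] using (hB0 u).trans (le_max_left _ _)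
    · simpa [norm_iteratedFDeriv_zero, hΦapp] using (hBr u).trans (le_max_right _ _)
  set B : ℝ := max B0 Br with hB
  have hBnn : 0 ≤ B := hB0pos.le.trans (le_max_left _ _)
  -- S' and its properties
  set τ : ℝ := 2 * Real.pi with hτ
  have hτpos : 0 < τ := by positivity
  set S' : E → ℝ := fun u => S (τ • u) with hS'
  have hS'int : Integrable S' := hS_int.comp_smul hτpos.ne'
  have hqmp := smul_qmp (d := d) τ hτpos.ne'
  have hS'low : ∀ᵐ u : E, C ≤ S' u * (1 + ‖τ • u‖ ^ r) := Measure.QuasiMeasurePreserving.ae hqmp hS_low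
  have hS'pos : ∀ᵐ u : E, 0 < S' u := by
    filter_upwards [hS'low] with u hu
    by_contra h
    push_neg at h
    have h1 : S' u * (1 + ‖τ • u‖ ^ r) ≤ 0 :=
      mul_nonpos_of_nonpos_of_nonneg h (by positivity)
    linarith
  -- integrability of the weight function
  have hψmeas : AEStronglyMeasurable ψ volume := hψInt.aestronglyMeasurable
  have hS'meas : AEStronglyMeasurable S' volume := hS'int.aestronglyMeasurable
  have hWmeas : AEStronglyMeasurable (fun u => ‖ψ u‖ ^ 2 / S' u) volume :=
    (((hψmeas.norm.aemeasurable.pow_const 2).div hS'meas.aemeasurable)).aestronglyMeasurable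
  have hdom : ∀ᵐ u : E, ‖‖ψ u‖ ^ 2 / S' u‖ ≤ (B + τ ^ r * B) / C * ‖ψ u‖ := by
    filter_upwards [hS'low, hS'pos] with u hu hupos
    have h1 : 1 / S' u ≤ (1 + ‖τ • u‖ ^ r) / C := by
      rw [div_le_div_iff₀ hupos hC]
      linarith [hu]
    have h2 : ‖ψ u‖ ^ 2 / S' u ≤ ‖ψ u‖ ^ 2 * ((1 + ‖τ • u‖ ^ r) / C) := by
      rw [div_eq_mul_one_div]
      exact mul_le_mul_of_nonneg_left h1 (by positivity)
    have h3 : ‖ψ u‖ ^ 2 * (1 + ‖τ • u‖ ^ r) ≤ (B + τ ^ r * B) * ‖ψ u‖ := by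
      have e1 : ‖ψ u‖ ^ 2 * 1 ≤ B * ‖ψ u‖ := by
        have := hψbd 0 (Or.inl rfl) u
        simp only [pow_zero, one_mul] at this
        nlinarith [norm_nonneg (ψ u)]
      have e2 : ‖ψ u‖ ^ 2 * ‖τ • u‖ ^ r ≤ τ ^ r * B * ‖ψ u‖ := by
        have hr1 := hψbd r (Or.inr rfl) u
        have : ‖τ • u‖ ^ r = τ ^ r * ‖u‖ ^ r := by
          rw [norm_smul, Real.norm_eq_abs, abs_of_pos hτpos, mul_pow]
        rw [this]
        nlinarith [mul_le_mul_of_nonneg_left hr1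
          (mul_nonneg (pow_nonneg hτpos.le r) (norm_nonneg (ψ u)))]
      calc ‖ψ u‖ ^ 2 * (1 + ‖τ • u‖ ^ r)
          = ‖ψ u‖ ^ 2 * 1 + ‖ψ u‖ ^ 2 * ‖τ • u‖ ^ r := by ring
        _ ≤ B * ‖ψ u‖ + τ ^ r * B * ‖ψ u‖ := add_le_add e1 e2
        _ = (B + τ ^ r * B) * ‖ψ u‖ := by ring
    have h4 : 0 ≤ ‖ψ u‖ ^ 2 / S' u := div_nonneg (by positivity) hupos.le
    rw [Real.norm_eq_abs, abs_of_nonneg h4]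
    calc ‖ψ u‖ ^ 2 / S' u ≤ ‖ψ u‖ ^ 2 * ((1 + ‖τ • u‖ ^ r) / C) := h2
      _ = ‖ψ u‖ ^ 2 * (1 + ‖τ • u‖ ^ r) / C := by ring
      _ ≤ (B + τ ^ r * B) * ‖ψ u‖ / C := by gcongr
      _ = (B + τ ^ r * B) / C * ‖ψ u‖ := by ring
  have hWint : Integrable (fun u => ‖ψ u‖ ^ 2 / S' u) :=
    Integrable.mono' (hψInt.norm.const_mul _) hWmeas hdom
  set A : ℝ := ∫ u, ‖ψ u‖ ^ 2 / S' u with hA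
  have hAnn : 0 ≤ A :=
    integral_nonneg fun u => div_nonneg (by positivity) (hS_nonneg _)
  have hinv' : ∀ t, F t = ∫ u, Complex.exp ((2*π*⟪u,t⟫ : ℝ) * Complex.I) * ψ u := by
    intro t
    have e : ∀ u : E, ((𝐞 ⟪u,t⟫ : Circle) : ℂ) = Complex.exp ((2*π*⟪u,t⟫ : ℝ) * Complex.I) :=
      fun u => by rw [Real.fourierChar_apply]
    rw [hinv t]
    simp_rw [e]
  refine ⟨(1 / (A + 1)) , by positivity, ?_⟩
  intro n pts hpts lam
  set G : E → ℂ := fun v => Complex.exp ((⟪v, x⟫ : ℝ) * Complex.I)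
      - ∑ i, (lam i : ℂ) * Complex.exp ((⟪v, pts i⟫ : ℝ) * Complex.I) with hGdef
  set H : E → ℂ := fun u => G (τ • u) with hHdef
  have hHeq : ∀ u, H u = Complex.exp ((2*π*⟪u,x⟫ : ℝ) * Complex.I)
      - ∑ i, (lam i : ℂ) * Complex.exp ((2*π*⟪u,pts i⟫ : ℝ) * Complex.I) := by
    intro u
    simp only [hHdef, hGdef, real_inner_smul_left, hτ]
  -- continuity of G and H
  have hinner : ∀ a : E, Continuous fun u : E => (⟪u, a⟫ : ℝ) := fun a =>
    continuous_id.inner continuous_const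
  have hexp : ∀ a : E, Continuous fun u : E => Complex.exp ((⟪u, a⟫ : ℝ) * Complex.I) := by
    intro a
    exact Complex.continuous_exp.comp ((Complex.continuous_ofReal.comp (hinner a)).mul
      continuous_const)
  have hGcont : Continuous G := by
    refine ((hexp x).sub ?_)
    exact continuous_finset_sum _ fun i _ => continuous_const.mul (hexp (pts i))
  have hHcont : Continuous H := hGcont.comp (continuous_const_smul τ)
  set M : ℝ := 1 + ∑ i, |lam i| with hM
  have hGbd : ∀ v, ‖G v‖ ≤ M := by
    intro v
    refine (norm_sub_le _ _).trans ?_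
    rw [hM]
    gcongr
    · rw [Complex.norm_exp_ofReal_mul_I]
    · refine (norm_sum_le _ _).trans ?_
      refine le_of_eq (Finset.sum_congr rfl fun i _ => ?_)
      rw [norm_mul, Complex.norm_exp_ofReal_mul_I,
        mul_one, Complex.norm_real, Real.norm_eq_abs]
  -- F x - ∑ λ_i F(pts i) = ∫ H ψ
  have hIexp : ∀ a : E, Integrable (fun u => Complex.exp ((2*π*⟪u,a⟫ : ℝ) * Complex.I) * ψ u) := by
    intro a
    refine hψInt.bdd_mul ?_ (c := 1) (ae_of_all _ fun u => ?_)
    · exact (Complex.continuous_exp.comp ((Complex.continuous_ofReal.comp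
        (continuous_const.mul (hinner a))).mul continuous_const)).aestronglyMeasurable
    · rw [Complex.norm_exp_ofReal_mul_I]
  have hsplit : ∫ u, H u * ψ u = F x - ∑ i, (lam i : ℂ) * F (pts i) := by
    have e1 : (fun u => H u * ψ u) = fun u =>
        Complex.exp ((2*π*⟪u,x⟫ : ℝ) * Complex.I) * ψ u
        - ∑ i, (lam i : ℂ) * (Complex.exp ((2*π*⟪u,pts i⟫ : ℝ) * Complex.I) * ψ u) := by
      funext u
      rw [hHeq u, sub_mul, Finset.sum_mul]
      congr 1
      exact Finset.sum_congr rfl fun i _ => by ring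
    rw [e1, integral_sub (hIexp x) (integrable_finset_sum _ fun i _ => (hIexp (pts i)).const_mul _),
      integral_finset_sum _ fun i _ => (hIexp (pts i)).const_mul _]
    rw [hinv' x]
    congr 1
    refine Finset.sum_congr rfl fun i _ => ?_
    rw [integral_const_mul, ← hinv' (pts i)]
  have hFx : F x = 1 := by
    have : f x = 1 := f.one_of_mem_closedBall (Metric.mem_closedBall_self (by positivity))
    show ((f x : ℝ) : ℂ) = 1
    exact_mod_cast this
  have hFpts : ∀ i, F (pts i) = 0 := by
    intro i
    have h1 : f.rOut ≤ dist (pts i) x := by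
      show 3*ε/4 ≤ dist (pts i) x
      linarith [hpts i]
    have : f (pts i) = 0 := f.zero_of_le_dist h1
    show ((f (pts i) : ℝ) : ℂ) = 0
    exact_mod_cast this
  have hone : (1:ℝ) ≤ ∫ u, ‖H u‖ * ‖ψ u‖ := by
    have h1 : ∫ u, H u * ψ u = 1 := by
      rw [hsplit, hFx]
      simp [hFpts]
    calc (1:ℝ) = ‖∫ u, H u * ψ u‖ := by rw [h1]; simp
      _ ≤ ∫ u, ‖H u * ψ u‖ := norm_integral_le_integral_norm _
      _ = ∫ u, ‖H u‖ * ‖ψ u‖ := by simp [norm_mul]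
  -- pointwise AM-GM
  have hA1 : (0:ℝ) < A + 1 := by linarith
  have hAM : ∀ᵐ u : E, ‖H u‖ * ‖ψ u‖ ≤ (A+1)/2 * (‖H u‖^2 * S' u)
      + 1/(2*(A+1)) * (‖ψ u‖^2 / S' u) := by
    filter_upwards [hS'pos] with u hs
    exact amgm_div _ _ _ _ hs hA1
  -- integrability of RHS pieces
  have hR1 : Integrable (fun u => ‖H u‖^2 * S' u) := by
    refine hS'int.bdd_mul ((hHcont.norm.pow 2)).aestronglyMeasurable (c := M^2) (ae_of_all _ fun u => ?_)
    rw [Real.norm_eq_abs, abs_of_nonneg (by positivity)]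
    exact pow_le_pow_left₀ (norm_nonneg _) (hGbd (τ • u)) 2
  have hL : Integrable (fun u => ‖H u‖ * ‖ψ u‖) := by
    refine hψInt.norm.bdd_mul hHcont.norm.aestronglyMeasurable (c := M) (ae_of_all _ fun u => ?_)
    rw [Real.norm_eq_abs, abs_of_nonneg (norm_nonneg _)]
    exact hGbd (τ • u)
  set Q' : ℝ := ∫ u, ‖H u‖^2 * S' u with hQ'def
  have hint : ∫ u, ((A+1)/2 * (‖H u‖^2 * S' u) + 1/(2*(A+1)) * (‖ψ u‖^2 / S' u))
      = (A+1)/2 * Q' + 1/(2*(A+1)) * A := by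
    rw [integral_add (hR1.const_mul _) (hWint.const_mul _), integral_const_mul, integral_const_mul]
  have hchain : (1:ℝ) ≤ (A+1)/2 * Q' + 1/(2*(A+1)) * A := by
    rw [← hint]
    exact hone.trans (integral_mono_ae hL ((hR1.const_mul _).add (hWint.const_mul _)) hAM)
  -- solve for Q'
  have h8 : 1/(2*(A+1)) * A ≤ 1/2 := by
    rw [div_mul_eq_mul_div, div_le_div_iff₀ (by positivity) (by norm_num)]
    nlinarith
  have h10 : 1 ≤ (A+1) * Q' := by nlinarith
  have hQ'lb : 1/(A+1) ≤ Q' := by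
    rw [div_le_iff₀ hA1]
    linarith [h10]
  -- change of variables
  have hcov := MeasureTheory.Measure.integral_comp_smul (volume : Measure E)
    (fun v => ‖G v‖^2 * S v) τ
  have hcov' : Q' = (τ ^ (Module.finrank ℝ E))⁻¹ * ∫ v, ‖G v‖^2 * S v := by
    rw [hQ'def]
    have : (fun u : E => ‖H u‖^2 * S' u) = fun u : E => ‖G (τ • u)‖^2 * S (τ • u) := rfl
    rw [this]
    rw [hcov, smul_eq_mul, abs_of_pos (by positivity)]
  have hQnn : (0:ℝ) ≤ ∫ v, ‖G v‖^2 * S v :=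
    integral_nonneg fun v => mul_nonneg (by positivity) (hS_nonneg v)
  have hτ1 : (1:ℝ) ≤ τ ^ (Module.finrank ℝ E) := by
    refine one_le_pow₀ ?_
    rw [hτ]
    nlinarith [Real.pi_gt_three]
  calc 1/(A+1) ≤ Q' := hQ'lb
    _ = (τ ^ (Module.finrank ℝ E))⁻¹ * ∫ v, ‖G v‖^2 * S v := hcov'
    _ ≤ 1 * ∫ v, ‖G v‖^2 * S v := by
        refine mul_le_mul_of_nonneg_right ?_ hQnn
        rw [inv_le_one_iff₀]
        right; exact hτ1
    _ = ∫ v, ‖G v‖^2 * S v := one_mul _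

/-- A process whose spectral density satisfies the polynomial-growth condition has the
No-Empty-Ball property: if the kriging variance at `x` tends to `0`, then `x` is
adherent to the set of design points. -/
theorem NEB_of_spectral_condition {d : ℕ}
    (S : EuclideanSpace ℝ (Fin d) → ℝ)
    (hS_nonneg : ∀ u, 0 ≤ S u) (hS_int : Integrable S)
    (C : ℝ) (hC : 0 < C) (r : ℕ)
    (hS_low : ∀ᵐ u : EuclideanSpace ℝ (Fin d), C ≤ S u * (1 + ‖u‖ ^ r))
    (k : EuclideanSpace ℝ (Fin d) → EuclideanSpace ℝ (Fin d) → ℝ)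
    (hk : ∀ x y, k x y = ∫ u, Real.cos ⟪u, x - y⟫ * S u)
    (xs : ℕ → EuclideanSpace ℝ (Fin d)) (x : EuclideanSpace ℝ (Fin d))
    (hvar : Tendsto (fun n : ℕ => krigVar k x (fun i : Fin n => xs i)) atTop (nhds 0)) :
    x ∈ closure (Set.range xs) := by
  by_contra hx
  rw [Metric.mem_closure_iff] at hx
  push_neg at hx
  obtain ⟨ε, hε, hfar⟩ := hx
  obtain ⟨c₀, hc₀, hlb⟩ := integral_lower_bound S hS_nonneg hS_int C hC r hS_low x ε hε
  have hvlb : ∀ n : ℕ, c₀ ≤ krigVar k x (fun i : Fin n => xs i) := by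
    intro n
    refine le_ciInf fun lam => ?_
    rw [krigQ_eq_integral S hS_int k hk x _ lam]
    exact hlb _ (fun i => by rw [dist_comm]; exact hfar _ ⟨i, rfl⟩) lam
  have hfin := ge_of_tendsto' hvar hvlb
  linarith
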